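/- Let f : S^m → S, let t be a type in {1,...,m}^N, and let τ ∈ S_m be a permutation. Then v ↦ τ^{-1}(v) gives a bijection from the set of vectors fixed by f_t to the set of vectors fixed by (f∘τ)_{τt}, where τ acts on vectors by τ(v_1,...,v_m) = (v_{τ(1)},...,v_{τ(m)}) and on types entrywise. -/

import Mathlib

/-- Replacement of the `j`-th entry of `v` by `f v`. -/
def rep {S : Type*} {m : ℕ} (f : (Fin m → S) → S) (j : Fin m) (v : Fin m → S) : Fin m → S :=
  Function.update v j (f v)

/-- The iterating function `f_t` for a type `t`, applying the replacements in order. -/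
def iterRep {S : Type*} {m : ℕ} (f : (Fin m → S) → S) : List (Fin m) → (Fin m → S) → (Fin m → S)
  | [], v => v
  | j :: t, v => iterRep f t (rep f j v)

/-- The action of `τ ∈ S_m` on vectors: `τ(v)_i = v_{τ(i)}`. -/
def permVec {S : Type*} {m : ℕ} (τ : Equiv.Perm (Fin m)) (v : Fin m → S) : Fin m → S :=
  fun i => v (τ i)

lemma permVec_permVec {S : Type*} {m : ℕ} (τ : Equiv.Perm (Fin m)) (v : Fin m → S) :
    permVec τ (permVec τ⁻¹ v) = v := by
  funext i; simp [permVec]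

lemma permVec_permVec' {S : Type*} {m : ℕ} (τ : Equiv.Perm (Fin m)) (v : Fin m → S) :
    permVec τ⁻¹ (permVec τ v) = v := by
  funext i; simp [permVec]

lemma rep_comm {S : Type*} {m : ℕ} (f : (Fin m → S) → S) (τ : Equiv.Perm (Fin m))
    (j : Fin m) (v : Fin m → S) :
    rep (fun w => f (permVec τ w)) (τ j) (permVec τ⁻¹ v) = permVec τ⁻¹ (rep f j v) := by
  funext i
  simp only [rep, permVec_permVec, permVec, Function.update]
  by_cases h : i = τ j
  · subst h; simp
  · have h2 : (τ⁻¹ : Equiv.Perm (Fin m)) i ≠ j := fun hc => h (by simp [← hc])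
    simp [h, h2]
    exact fun hc => absurd hc h2

lemma iterRep_comm {S : Type*} {m : ℕ} (f : (Fin m → S) → S) (τ : Equiv.Perm (Fin m))
    (t : List (Fin m)) (v : Fin m → S) :
    iterRep (fun w => f (permVec τ w)) (t.map ⇑τ) (permVec τ⁻¹ v) =
      permVec τ⁻¹ (iterRep f t v) := by
  induction t generalizing v with
  | nil => rfl
  | cons j t ih =>
    simp only [List.map_cons, iterRep, rep_comm]
    exact ih _

/-- `v ↦ τ⁻¹(v)` is a bijection from the fixed vectors of `f_t`
to the fixed vectors of `(f∘τ)_{τt}`, with inverse `w ↦ τ(w)`. -/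
theorem perm_bijection {S : Type*} {m : ℕ} (f : (Fin m → S) → S)
    (τ : Equiv.Perm (Fin m)) (t : List (Fin m)) :
    (∀ v : Fin m → S, iterRep f t v = v →
      iterRep (fun w => f (permVec τ w)) (t.map ⇑τ) (permVec τ⁻¹ v) = permVec τ⁻¹ v) ∧
    (∀ w : Fin m → S, iterRep (fun w => f (permVec τ w)) (t.map ⇑τ) w = w →
      iterRep f t (permVec τ w) = permVec τ w) := by
  constructor
  · intro v hv
    rw [iterRep_comm, hv]
  · intro w hw
    have := iterRep_comm f τ t (permVec τ w)
    rw [permVec_permVec', hw] at this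
    have := congrArg (permVec τ) this.symm
    rwa [permVec_permVec] at this
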